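/- arXiv:1411.2681 — 2 statements merged into one kernel-verified Lean document; each statement's English description precedes it below -/
import Mathlib

section
/- The metric space (𝓔, ℍ) is separable: the countable family of step functions taking rational values on intervals with rational endpoints (with values at partition points equal to the max of the two adjacent values) is dense in (𝓔, ℍ). -/
open Set Metric Filter

def hypo (f : ℝ → ℝ) : Set (EuclideanSpace ℝ (Fin 2)) :=
  {p | p 0 ∈ Set.Icc (0:ℝ) 1 ∧ 0 ≤ p 1 ∧ p 1 ≤ f (p 0)}

noncomputable def HH (f g : ℝ → ℝ) : ℝ := Metric.hausdorffDist (hypo f) (hypo g)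

def memE (f : ℝ → ℝ) : Prop :=
  (∀ x ∈ Set.Icc (0:ℝ) 1, 0 ≤ f x) ∧ UpperSemicontinuousOn f (Set.Icc (0:ℝ) 1)

/-- The step function associated with a rational partition `x 0 < ⋯ < x n` and
rational values `q 0, …, q (n-1)`: it takes the value `q i` on `(x i, x (i+1))`
and, at a partition point, the max of the two adjacent values (the convention
making it USC). This is realized by taking a `sup` over the closed intervals. -/
noncomputable def ratStep (n : ℕ) (x : ℕ → ℚ) (q : ℕ → ℚ) : ℝ → ℝ := fun t =>
  sSup {y : ℝ | ∃ i < n, t ∈ Set.Icc ((x i : ℝ)) ((x (i+1) : ℝ)) ∧ y = (q i : ℝ)}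

/-- The countable family of nonnegative rational step functions. -/
def ratStepSet : Set (ℝ → ℝ) :=
  {g | ∃ (n : ℕ) (x : ℕ → ℚ) (q : ℕ → ℚ), 0 < n ∧ x 0 = 0 ∧ x n = 1 ∧
    (∀ i < n, x i < x (i+1)) ∧ (∀ i < n, 0 ≤ q i) ∧ g = ratStep n x q}

open Topology

/-! ### Auxiliary lemmas -/

lemma usc_bddAbove {f : ℝ → ℝ} (hf : UpperSemicontinuousOn f (Icc (0:ℝ) 1)) :
    BddAbove (f '' Icc (0:ℝ) 1) := by
  set s : Set ℝ := Icc (0:ℝ) 1 with hs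
  have hU : ∀ t ∈ s, ∃ u : Set ℝ, u ∈ 𝓝 t ∧ ∀ y ∈ u ∩ s, f y < f t + 1 := by
    intro t ht
    have := hf t ht (f t + 1) (by linarith)
    rw [eventually_iff, mem_nhdsWithin] at this
    obtain ⟨u, hu, htu, hsub⟩ := this
    exact ⟨u, hu.mem_nhds htu, fun y hy => hsub hy⟩
  choose! U hU1 hU2 using hU
  obtain ⟨T, hTs, hTcov⟩ := (isCompact_Icc (a := (0:ℝ)) (b := 1)).elim_nhds_subcover U
    (fun t ht => hU1 t ht)
  have hsub : f '' s ⊆ ⋃ t ∈ T, Iio (f t + 1) := by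
    rintro _ ⟨y, hy, rfl⟩
    obtain ⟨t, htT, hyU⟩ := mem_iUnion₂.1 (hTcov hy)
    exact mem_iUnion₂.2 ⟨t, htT, hU2 t (hTs t htT) y ⟨hyU, hy⟩⟩
  exact (BddAbove.mono hsub) ((Set.Finite.bddAbove_biUnion (T.finite_toSet)).2
    (fun t _ => bddAbove_Iio))

lemma stepSet_finite (n : ℕ) (x q : ℕ → ℚ) (t : ℝ) :
    Set.Finite {y : ℝ | ∃ i < n, t ∈ Set.Icc ((x i : ℝ)) ((x (i+1) : ℝ)) ∧ y = (q i : ℝ)} := by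
  apply Set.Finite.subset (Set.Finite.image (fun i => (q i : ℝ)) (Set.finite_Iio n))
  rintro y ⟨i, hi, _, rfl⟩
  exact ⟨i, hi, rfl⟩

lemma exists_interval {n : ℕ} {x : ℕ → ℚ} (hn : 0 < n) (hx0 : x 0 = 0) (hxn : x n = 1)
    (hmono : ∀ i < n, x i < x (i+1)) {t : ℝ} (ht : t ∈ Icc (0:ℝ) 1) :
    ∃ i < n, t ∈ Icc ((x i : ℝ)) ((x (i+1) : ℝ)) := by
  classical
  set F := (Finset.range (n+1)).filter (fun i => (x i : ℝ) ≤ t) with hF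
  have h0F : 0 ∈ F := by simp [hF, hx0, ht.1]
  have hFne : F.Nonempty := ⟨0, h0F⟩
  set i := F.max' hFne with hi
  have hiF : i ∈ F := F.max'_mem hFne
  have hile : (x i : ℝ) ≤ t := (Finset.mem_filter.1 hiF).2
  have hin : i ≤ n := Nat.lt_succ_iff.1 (Finset.mem_range.1 (Finset.mem_filter.1 hiF).1)
  rcases eq_or_lt_of_le hin with heq | hlt
  · refine ⟨n - 1, by omega, ?_, ?_⟩
    · have h1 : (x (n-1) : ℝ) ≤ (x n : ℝ) := by
        exact_mod_cast le_of_lt (hmono (n-1) (by omega) |>.trans_le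
          (le_of_eq (by rw [Nat.sub_add_cancel hn])))
      have ht1 : t = 1 := le_antisymm ht.2 (by rw [heq] at hile; simpa [hxn] using hile)
      rw [ht1]
      calc (x (n-1) : ℝ) ≤ (x n : ℝ) := h1
        _ = 1 := by rw [hxn]; norm_num
    · rw [Nat.sub_add_cancel hn, hxn]; exact_mod_cast ht.2
  · refine ⟨i, hlt, hile, ?_⟩
    by_contra hc
    push_neg at hc
    have : i + 1 ∈ F := by
      simp only [hF, Finset.mem_filter, Finset.mem_range]
      exact ⟨by omega, le_of_lt hc⟩
    have := F.le_max' _ this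
    omega

lemma le_ratStep {n : ℕ} {x q : ℕ → ℚ} {t : ℝ} {i : ℕ} (hi : i < n)
    (ht : t ∈ Icc ((x i : ℝ)) ((x (i+1) : ℝ))) : (q i : ℝ) ≤ ratStep n x q t :=
  le_csSup (Set.Finite.bddAbove (stepSet_finite n x q t)) ⟨i, hi, ht, rfl⟩

lemma ratStep_nonneg {n : ℕ} {x q : ℕ → ℚ} (hn : 0 < n) (hx0 : x 0 = 0) (hxn : x n = 1)
    (hmono : ∀ i < n, x i < x (i+1)) (hq : ∀ i < n, 0 ≤ q i) {t : ℝ}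
    (ht : t ∈ Icc (0:ℝ) 1) : 0 ≤ ratStep n x q t := by
  obtain ⟨i, hi, hti⟩ := exists_interval hn hx0 hxn hmono ht
  exact le_trans (by exact_mod_cast hq i hi) (le_ratStep hi hti)

lemma ratStep_memE {n : ℕ} {x q : ℕ → ℚ} (hn : 0 < n) (hx0 : x 0 = 0) (hxn : x n = 1)
    (hmono : ∀ i < n, x i < x (i+1)) (hq : ∀ i < n, 0 ≤ q i) :
    memE (ratStep n x q) := by
  refine ⟨fun t ht => ratStep_nonneg hn hx0 hxn hmono hq ht, ?_⟩
  intro t₀ ht₀ y hy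
  classical
  set V : Set ℝ := ⋂ i ∈ Finset.range n,
    (if t₀ ∈ Icc ((x i:ℝ)) ((x (i+1):ℝ)) then (univ : Set ℝ)
     else (Icc ((x i:ℝ)) ((x (i+1):ℝ)))ᶜ) with hV
  have hVopen : IsOpen V := by
    apply isOpen_biInter_finset
    intro i _
    split_ifs
    · exact isOpen_univ
    · exact isOpen_compl_iff.2 isClosed_Icc
  have ht₀V : t₀ ∈ V := by
    refine mem_iInter₂.2 (fun i _ => ?_)
    split_ifs with h
    · trivial
    · exact h
  have key : ∀ t ∈ V, ratStep n x q t ≤ ratStep n x q t₀ := by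
    intro t htV
    have hsub : {y : ℝ | ∃ i < n, t ∈ Icc ((x i:ℝ)) ((x (i+1):ℝ)) ∧ y = (q i:ℝ)} ⊆
        {y : ℝ | ∃ i < n, t₀ ∈ Icc ((x i:ℝ)) ((x (i+1):ℝ)) ∧ y = (q i:ℝ)} := by
      rintro y ⟨i, hi, hti, rfl⟩
      refine ⟨i, hi, ?_, rfl⟩
      have := mem_iInter₂.1 htV i (Finset.mem_range.2 hi)
      by_contra h
      rw [if_neg h] at this
      exact this hti
    rcases Set.eq_empty_or_nonempty
        {y : ℝ | ∃ i < n, t ∈ Icc ((x i:ℝ)) ((x (i+1):ℝ)) ∧ y = (q i:ℝ)} with he | hne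
    · show sSup _ ≤ _
      rw [he, Real.sSup_empty]
      exact ratStep_nonneg hn hx0 hxn hmono hq ht₀
    · exact csSup_le_csSup (Set.Finite.bddAbove (stepSet_finite n x q t₀)) hne hsub
  have hmem : V ∈ 𝓝[Icc (0:ℝ) 1] t₀ := mem_nhdsWithin_of_mem_nhds (hVopen.mem_nhds ht₀V)
  filter_upwards [hmem] with t htV
  exact lt_of_le_of_lt (key t htV) hy

lemma ratStepSet_countable : Set.Countable ratStepSet := by
  have hsub : ratStepSet ⊆ ⋃ n : ℕ, Set.range (fun p : (Fin (n+1) → ℚ) × (Fin (n+1) → ℚ) =>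
      ratStep n (fun i => p.1 ⟨min i n, Nat.lt_succ_of_le (min_le_right _ _)⟩)
                (fun i => p.2 ⟨min i n, Nat.lt_succ_of_le (min_le_right _ _)⟩)) := by
    rintro g ⟨n, x, q, hn, hx0, hxn, hmono, hq, rfl⟩
    refine mem_iUnion.2 ⟨n, ⟨(fun j => x j, fun j => q j), ?_⟩⟩
    funext t
    show sSup _ = sSup _
    congr 1
    ext y
    constructor
    · rintro ⟨i, hi, hti, rfl⟩
      refine ⟨i, hi, ?_, ?_⟩
      · simpa [min_eq_left (Nat.le_of_lt hi), min_eq_left (Nat.succ_le_of_lt hi)] using hti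
      · simp [min_eq_left (Nat.le_of_lt hi)]
    · rintro ⟨i, hi, hti, rfl⟩
      refine ⟨i, hi, ?_, ?_⟩
      · simpa [min_eq_left (Nat.le_of_lt hi), min_eq_left (Nat.succ_le_of_lt hi)] using hti
      · simp [min_eq_left (Nat.le_of_lt hi)]
  exact Set.Countable.mono hsub (Set.countable_iUnion (fun n => Set.countable_range _))

lemma dist_pt_le (p p' : EuclideanSpace ℝ (Fin 2)) (c d : ℝ)
    (h0 : dist (p 0) (p' 0) ≤ c) (h1 : dist (p 1) (p' 1) ≤ d) : dist p p' ≤ c + d := by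
  have hc : 0 ≤ c := le_trans dist_nonneg h0
  have hd : 0 ≤ d := le_trans dist_nonneg h1
  rw [EuclideanSpace.dist_eq, Fin.sum_univ_two]
  have : dist (p 0) (p' 0) ^ 2 + dist (p 1) (p' 1) ^ 2 ≤ (c + d) ^ 2 := by
    nlinarith [dist_nonneg (x := p 0) (y := p' 0), dist_nonneg (x := p 1) (y := p' 1)]
  calc Real.sqrt (dist (p 0) (p' 0) ^ 2 + dist (p 1) (p' 1) ^ 2)
      ≤ Real.sqrt ((c + d) ^ 2) := Real.sqrt_le_sqrt this
    _ = c + d := Real.sqrt_sq (by linarith)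

noncomputable def pt (a b : ℝ) : EuclideanSpace ℝ (Fin 2) :=
  (WithLp.equiv 2 (Fin 2 → ℝ)).symm ![a, b]

@[simp] lemma pt_zero (a b : ℝ) : pt a b 0 = a := rfl
@[simp] lemma pt_one (a b : ℝ) : pt a b 1 = b := rfl

lemma dense_step (f : ℝ → ℝ) (hf : memE f) (ε : ℝ) (hε : 0 < ε) :
    ∃ g ∈ ratStepSet, HH f g < ε := by
  classical
  obtain ⟨hpos, husc⟩ := hf
  have hbdd : BddAbove (f '' Icc (0:ℝ) 1) := usc_bddAbove husc
  -- choose n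
  set n : ℕ := ⌈3/ε⌉₊ + 1 with hn
  have hnpos : 0 < n := Nat.succ_pos _
  have hnR : (0:ℝ) < n := by exact_mod_cast hnpos
  have h3n : (3:ℝ)/ε < n := by
    calc (3:ℝ)/ε ≤ ⌈3/ε⌉₊ := Nat.le_ceil _
      _ < n := by exact_mod_cast Nat.lt_succ_self _
  have hmesh : (1:ℝ)/n < ε/3 := by
    rw [div_lt_div_iff₀ hnR (by norm_num)]
    have := (div_lt_iff₀ hε).1 h3n
    linarith
  -- the partition
  set x : ℕ → ℚ := fun i => (i:ℚ)/(n:ℚ) with hxdef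
  have hxcast : ∀ i : ℕ, ((x i : ℝ)) = (i:ℝ)/n := by
    intro i; simp [hxdef]
  have hxcast' : ∀ i : ℕ, ((x (i+1) : ℝ)) = ((i:ℝ)+1)/n := by
    intro i; rw [hxcast (i+1)]; congr 1; push_cast; ring
  have hx0 : x 0 = 0 := by simp [hxdef]
  have hxn : x n = 1 := by
    simp [hxdef]
  have hnQ : (0:ℚ) < n := by exact_mod_cast hnpos
  have hmono : ∀ i, x i < x (i+1) := by
    intro i
    simp only [hxdef]
    gcongr
    exact_mod_cast Nat.lt_succ_self i
  -- interval containment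
  have hIsub : ∀ i < n, Icc ((i:ℝ)/n) (((i:ℝ)+1)/n) ⊆ Icc (0:ℝ) 1 := by
    intro i hi
    apply Icc_subset_Icc
    · positivity
    · rw [div_le_one hnR]
      have : (i:ℝ) + 1 ≤ n := by exact_mod_cast Nat.succ_le_of_lt hi
      linarith
  have hIne : ∀ i : ℕ, ((f '' Icc ((i:ℝ)/n) (((i:ℝ)+1)/n))).Nonempty := by
    intro i
    refine ⟨f ((i:ℝ)/n), ⟨(i:ℝ)/n, ⟨le_refl _, ?_⟩, rfl⟩⟩
    gcongr
    linarith
  have hIbdd : ∀ i < n, BddAbove (f '' Icc ((i:ℝ)/n) (((i:ℝ)+1)/n)) := fun i hi =>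
    hbdd.mono (Set.image_mono (hIsub i hi))
  set M : ℕ → ℝ := fun i => sSup (f '' Icc ((i:ℝ)/n) (((i:ℝ)+1)/n)) with hM
  have hMnonneg : ∀ i < n, 0 ≤ M i := by
    intro i hi
    have h1 : (i:ℝ)/n ∈ Icc ((i:ℝ)/n) (((i:ℝ)+1)/n) := ⟨le_refl _, by gcongr; linarith⟩
    exact le_trans (hpos _ (hIsub i hi h1)) (le_csSup (hIbdd i hi) ⟨_, h1, rfl⟩)
  have hfleM : ∀ i < n, ∀ s ∈ Icc ((i:ℝ)/n) (((i:ℝ)+1)/n), f s ≤ M i := fun i hi s hs =>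
    le_csSup (hIbdd i hi) ⟨s, hs, rfl⟩
  choose q' hq1 hq2 using fun i (_ : i < n) =>
    exists_rat_btwn (show M i < M i + ε/3 by linarith)
  set q : ℕ → ℚ := fun i => if h : i < n then q' i h else 0 with hqdef
  have hqM : ∀ i, i < n → M i < (q i : ℝ) := by
    intro i hi; simp only [hqdef, dif_pos hi]; exact hq1 i hi
  have hqM2 : ∀ i, i < n → ((q i : ℝ)) < M i + ε/3 := by
    intro i hi; simp only [hqdef, dif_pos hi]; exact hq2 i hi
  have hqnn : ∀ i < n, 0 ≤ q i := by
    intro i hi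
    have : (0:ℝ) ≤ (q i : ℝ) := le_of_lt (lt_of_le_of_lt (hMnonneg i hi) (hqM i hi))
    exact_mod_cast this
  have hlen : ∀ i : ℕ, ((i:ℝ)+1)/n - (i:ℝ)/n = 1/n := by
    intro i; rw [div_sub_div_same]; norm_num
  refine ⟨ratStep n x q, ⟨n, x, q, hnpos, hx0, hxn, fun i _ => hmono i, hqnn, rfl⟩, ?_⟩
  have hr : (0:ℝ) ≤ 2*ε/3 := by linarith
  have H1 : ∀ p ∈ hypo f, ∃ p' ∈ hypo (ratStep n x q), dist p p' ≤ 2*ε/3 := by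
    intro p hp
    refine ⟨p, ?_, by simp [hr]⟩
    obtain ⟨hp0, hp1, hp2⟩ := hp
    obtain ⟨i, hi, hti⟩ := exists_interval hnpos hx0 hxn (fun i _ => hmono i) hp0
    have hti' : p 0 ∈ Icc ((i:ℝ)/n) (((i:ℝ)+1)/n) := by
      rw [hxcast i, hxcast' i] at hti; exact hti
    refine ⟨hp0, hp1, ?_⟩
    have h1 : f (p 0) ≤ M i := hfleM i hi _ hti'
    have h2 : (q i : ℝ) ≤ ratStep n x q (p 0) := le_ratStep hi hti
    linarith [hqM i hi]
  have H2 : ∀ p ∈ hypo (ratStep n x q), ∃ p' ∈ hypo f, dist p p' ≤ 2*ε/3 := by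
    intro p hp
    obtain ⟨hp0, hp1, hp2⟩ := hp
    have hne : {y : ℝ | ∃ i < n, p 0 ∈ Icc ((x i:ℝ)) ((x (i+1):ℝ)) ∧ y = (q i:ℝ)}.Nonempty := by
      obtain ⟨i, hi, hti⟩ := exists_interval hnpos hx0 hxn (fun i _ => hmono i) hp0
      exact ⟨(q i : ℝ), i, hi, hti, rfl⟩
    obtain ⟨i, hi, hti, hval⟩ := hne.csSup_mem (stepSet_finite n x q (p 0))
    have hy : p 1 ≤ (q i : ℝ) := le_trans hp2 (le_of_eq hval)
    have hti' : p 0 ∈ Icc ((i:ℝ)/n) (((i:ℝ)+1)/n) := by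
      rw [hxcast i, hxcast' i] at hti; exact hti
    have hlt : (q i:ℝ) - ε/3 < M i := by linarith [hqM2 i hi]
    obtain ⟨z, ⟨s, hsI, rfl⟩, hz⟩ := exists_lt_of_lt_csSup (hIne i) hlt
    have hs01 : s ∈ Icc (0:ℝ) 1 := hIsub i hi hsI
    set y' : ℝ := min (p 1) (f s) with hy'
    have hy'0 : 0 ≤ y' := le_min hp1 (hpos s hs01)
    refine ⟨pt s y', ⟨by simpa using hs01, by simpa using hy'0,
      by simp only [pt_one, pt_zero]; exact min_le_right _ _⟩, ?_⟩
    refine le_trans (dist_pt_le p (pt s y') (ε/3) (ε/3) ?_ ?_) (by linarith)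
    · rw [Real.dist_eq, pt_zero, abs_sub_le_iff]
      have := hlen i
      constructor
      · linarith [hti'.2, hsI.1]
      · linarith [hti'.1, hsI.2]
    · rw [Real.dist_eq, pt_one, abs_sub_le_iff]
      rcases le_total (p 1) (f s) with h | h
      · rw [hy', min_eq_left h]
        constructor <;> linarith
      · rw [hy', min_eq_right h]
        constructor <;> linarith
  have hH : HH f (ratStep n x q) ≤ 2*ε/3 :=
    hausdorffDist_le_of_mem_dist hr H1 H2
  linarith

/-- Separability of `(𝓔, ℍ)`: the countable family of rational step functions
is `ℍ`-dense in the space of nonnegative USC functions on `[0,1]`. -/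
theorem stmt_11 :
    Set.Countable ratStepSet ∧
    (∀ g ∈ ratStepSet, memE g) ∧
    (∀ f : ℝ → ℝ, memE f → ∀ ε : ℝ, 0 < ε → ∃ g ∈ ratStepSet, HH f g < ε) := by
  refine ⟨ratStepSet_countable, ?_, dense_step⟩
  rintro g ⟨n, x, q, hn, hx0, hxn, hmono, hq, rfl⟩
  exact ratStep_memE hn hx0 hxn hmono hq
end

section
/- In the metric space (𝓔, ℍ), every closed and bounded set is compact; in particular, (𝓔, ℍ) is locally compact (closed balls are compact). -/
open Set Metric Filter

noncomputable section StmtHelpers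

abbrev E2 := EuclideanSpace ℝ (Fin 2)

def mk2 (x y : ℝ) : E2 := EuclideanSpace.single 0 x + EuclideanSpace.single 1 y

@[simp] lemma mk2_apply0 (x y : ℝ) : mk2 x y 0 = x := by
  simp [mk2, EuclideanSpace.single_apply, PiLp.add_apply]

@[simp] lemma mk2_apply1 (x y : ℝ) : mk2 x y 1 = y := by
  simp [mk2, EuclideanSpace.single_apply, PiLp.add_apply]

lemma mk2_eta (p : E2) : mk2 (p 0) (p 1) = p := by
  ext i
  fin_cases i <;> simp [mk2, EuclideanSpace.single_apply, PiLp.add_apply]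

lemma abs_coord_sub_le_dist (p q : E2) (i : Fin 2) : |p i - q i| ≤ dist p q := by
  rw [EuclideanSpace.dist_eq]
  rw [← Real.sqrt_sq_eq_abs]
  apply Real.sqrt_le_sqrt
  have : (p i - q i) ^ 2 = dist (p i) (q i) ^ 2 := by rw [Real.dist_eq, sq_abs]
  rw [this]
  exact Finset.single_le_sum (f := fun j => dist (p j) (q j) ^ 2)
    (fun j _ => sq_nonneg _) (Finset.mem_univ i)

lemma dist_mk2_le (x y x' y' : ℝ) : dist (mk2 x y) (mk2 x' y') ≤ |x - x'| + |y - y'| := by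
  rw [dist_eq_norm]
  have h : mk2 x y - mk2 x' y' = EuclideanSpace.single 0 (x - x') + EuclideanSpace.single 1 (y - y') := by
    ext i
    fin_cases i <;>
      simp [mk2, EuclideanSpace.single_apply, PiLp.add_apply, PiLp.sub_apply]
  rw [h]
  calc ‖EuclideanSpace.single (0 : Fin 2) (x - x') + EuclideanSpace.single 1 (y - y')‖
      ≤ ‖EuclideanSpace.single (0 : Fin 2) (x - x')‖ + ‖EuclideanSpace.single (1 : Fin 2) (y - y')‖ :=
        norm_add_le _ _
    _ = |x - x'| + |y - y'| := by
        rw [EuclideanSpace.norm_single, EuclideanSpace.norm_single, Real.norm_eq_abs,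
          Real.norm_eq_abs]

lemma abs_coord_le_norm (p : E2) (i : Fin 2) : |p i| ≤ ‖p‖ := by
  have := abs_coord_sub_le_dist p 0 i
  simpa [dist_zero_right] using this

lemma norm_mk2_le (x y : ℝ) : ‖mk2 x y‖ ≤ |x| + |y| := by
  have := dist_mk2_le x y 0 0
  have h0 : mk2 0 0 = (0 : E2) := by
    ext i; fin_cases i <;> simp [mk2, EuclideanSpace.single_apply, PiLp.add_apply]
  rw [h0, dist_zero_right] at this
  simpa using this

lemma lipschitz_mk2 (x : ℝ) : LipschitzWith 1 (fun y => mk2 x y) := by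
  apply LipschitzWith.of_dist_le_mul
  intro y y'
  simpa [Real.dist_eq] using dist_mk2_le x y x y'

lemma tendsto_mk2 {a b : ℕ → ℝ} {A B : ℝ} (ha : Tendsto a atTop (nhds A))
    (hb : Tendsto b atTop (nhds B)) :
    Tendsto (fun n => mk2 (a n) (b n)) atTop (nhds (mk2 A B)) := by
  rw [tendsto_iff_dist_tendsto_zero]
  have h1 : Tendsto (fun n => |a n - A| + |b n - B|) atTop (nhds 0) := by
    have ha' : Tendsto (fun n => |a n - A|) atTop (nhds 0) := by
      have := (ha.sub_const A).abs; simpa using this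
    have hb' : Tendsto (fun n => |b n - B|) atTop (nhds 0) := by
      have := (hb.sub_const B).abs; simpa using this
    simpa using ha'.add hb'
  exact squeeze_zero (fun n => dist_nonneg) (fun n => dist_mk2_le _ _ _ _) h1

lemma tendsto_coord {p : ℕ → E2} {P : E2} (h : Tendsto p atTop (nhds P)) (i : Fin 2) :
    Tendsto (fun n => p n i) atTop (nhds (P i)) :=
  ((EuclideanSpace.proj i).continuous.tendsto P).comp h

lemma mk2_mem_hypo {f : ℝ → ℝ} {x y : ℝ} (hx : x ∈ Set.Icc (0:ℝ) 1) (hy0 : 0 ≤ y)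
    (hyf : y ≤ f x) : mk2 x y ∈ hypo f := by
  refine ⟨?_, ?_, ?_⟩ <;> simp [hx, hy0, hyf]

lemma usc_bddAbove_s12 {f : ℝ → ℝ} (hf : UpperSemicontinuousOn f (Set.Icc (0:ℝ) 1)) :
    ∃ M, 0 ≤ M ∧ ∀ x ∈ Set.Icc (0:ℝ) 1, f x ≤ M := by
  by_contra h
  push_neg at h
  have h' : ∀ n : ℕ, ∃ x ∈ Set.Icc (0:ℝ) 1, (n : ℝ) < f x := by
    intro n
    obtain ⟨x, hx, hfx⟩ := h n (Nat.cast_nonneg n)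
    exact ⟨x, hx, hfx⟩
  choose x hx hfx using h'
  obtain ⟨z, hz, φ, hφ, hlim⟩ := (isCompact_Icc (a := (0:ℝ)) (b := 1)).tendsto_subseq hx
  have h1 : ∀ᶠ x' in nhdsWithin z (Set.Icc (0:ℝ) 1), f x' < f z + 1 :=
    hf z hz (f z + 1) (by linarith)
  have h2 : Tendsto (fun n => x (φ n)) atTop (nhdsWithin z (Set.Icc (0:ℝ) 1)) :=
    tendsto_nhdsWithin_iff.2 ⟨hlim, Eventually.of_forall fun n => hx _⟩
  obtain ⟨N, hN⟩ := eventually_atTop.1 (h2.eventually h1)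
  set n := max N ⌈f z + 1⌉₊ with hn
  have hc1 : (n : ℝ) ≤ f (x (φ n)) := by
    have := hfx (φ n)
    have hφn : (n : ℝ) ≤ (φ n : ℝ) := by exact_mod_cast hφ.le_apply
    linarith
  have h3 : f (x (φ n)) < f z + 1 := hN n (le_max_left _ _)
  have h4 : f z + 1 ≤ (n : ℝ) := by
    calc f z + 1 ≤ (⌈f z + 1⌉₊ : ℝ) := Nat.le_ceil _
      _ ≤ (n : ℝ) := by exact_mod_cast le_max_right N _
  linarith

lemma hypo_nonempty {f : ℝ → ℝ} (hf : memE f) : (hypo f).Nonempty :=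
  ⟨mk2 0 0, mk2_mem_hypo (by norm_num) le_rfl (hf.1 0 (by norm_num))⟩

lemma hypo_subset_closedBall {f : ℝ → ℝ} (hf : memE f) :
    ∃ M, 0 ≤ M ∧ hypo f ⊆ closedBall (0 : E2) M := by
  obtain ⟨M, hM0, hM⟩ := usc_bddAbove_s12 hf.2
  refine ⟨1 + M, by linarith, fun p hp => ?_⟩
  obtain ⟨hp0, hp1, hp2⟩ := hp
  rw [mem_closedBall, dist_zero_right]
  rw [← mk2_eta p]
  calc ‖mk2 (p 0) (p 1)‖ ≤ |p 0| + |p 1| := norm_mk2_le _ _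
    _ ≤ 1 + M := by
        have h1 : |p 0| ≤ 1 := abs_le.2 ⟨by linarith [hp0.1], hp0.2⟩
        have h2 : |p 1| ≤ M := abs_le.2 ⟨by linarith [hM _ hp0, hp1], le_trans hp2 (hM _ hp0)⟩
        linarith

lemma hypo_bounded {f : ℝ → ℝ} (hf : memE f) : Bornology.IsBounded (hypo f) := by
  obtain ⟨M, _, hM⟩ := hypo_subset_closedBall hf
  exact (isBounded_closedBall).subset hM

lemma hypo_closed {f : ℝ → ℝ} (hf : memE f) : IsClosed (hypo f) := by
  apply IsSeqClosed.isClosed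
  intro p P hp hP
  have h0 : Tendsto (fun n => p n 0) atTop (nhds (P 0)) := tendsto_coord hP 0
  have h1 : Tendsto (fun n => p n 1) atTop (nhds (P 1)) := tendsto_coord hP 1
  have hP0 : P 0 ∈ Set.Icc (0:ℝ) 1 := isClosed_Icc.mem_of_tendsto h0
    (Eventually.of_forall fun n => (hp n).1)
  have hP1 : 0 ≤ P 1 := ge_of_tendsto h1 (Eventually.of_forall fun n => (hp n).2.1)
  refine ⟨hP0, hP1, ?_⟩
  by_contra hcon
  push_neg at hcon
  set y := (f (P 0) + P 1) / 2 with hy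
  have husc : ∀ᶠ x' in nhdsWithin (P 0) (Set.Icc (0:ℝ) 1), f x' < y :=
    hf.2 (P 0) hP0 y (by rw [hy]; linarith)
  have h2 : Tendsto (fun n => p n 0) atTop (nhdsWithin (P 0) (Set.Icc (0:ℝ) 1)) :=
    tendsto_nhdsWithin_iff.2 ⟨h0, Eventually.of_forall fun n => (hp n).1⟩
  have h3 : ∀ᶠ n in atTop, p n 1 ≤ y := by
    filter_upwards [h2.eventually husc] with n hn
    exact le_of_lt (lt_of_le_of_lt (hp n).2.2 hn)
  have h4 : P 1 ≤ y := le_of_tendsto h1 h3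
  rw [hy] at h4
  linarith

end StmtHelpers

/-- In `(𝓔, ℍ)`, every `ℍ`-closed and `ℍ`-bounded set is (sequentially)
compact: every sequence in such a set has a subsequence converging in `ℍ` to an
element of the set. In particular closed balls are compact and `(𝓔, ℍ)` is
locally compact. -/
theorem stmt_12 (A : Set (ℝ → ℝ)) (hA : ∀ f ∈ A, memE f)
    (hbdd : ∃ (g : ℝ → ℝ) (r : ℝ), memE g ∧ ∀ f ∈ A, HH f g ≤ r)
    (hclosed : ∀ u : ℕ → ℝ → ℝ, (∀ n, u n ∈ A) → ∀ f : ℝ → ℝ, memE f →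
      Filter.Tendsto (fun n => HH (u n) f) Filter.atTop (nhds 0) → f ∈ A) :
    ∀ u : ℕ → ℝ → ℝ, (∀ n, u n ∈ A) →
      ∃ f ∈ A, ∃ φ : ℕ → ℕ, StrictMono φ ∧
        Filter.Tendsto (fun n => HH (u (φ n)) f) Filter.atTop (nhds 0) := by
  intro u hu
  obtain ⟨g, r, hg, hr⟩ := hbdd
  obtain ⟨Rg, hRg0, hRg⟩ := hypo_subset_closedBall hg
  have hr0 : 0 ≤ r := le_trans Metric.hausdorffDist_nonneg (hr (u 0) (hu 0))
  set R := Rg + r + 2 with hRdef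
  have hR0 : 0 ≤ R := by positivity
  have hEfin : ∀ n, EMetric.hausdorffEdist (hypo (u n)) (hypo g) ≠ ⊤ := fun n =>
    Metric.hausdorffEdist_ne_top_of_nonempty_of_bounded (hypo_nonempty (hA _ (hu n)))
      (hypo_nonempty hg) (hypo_bounded (hA _ (hu n))) (hypo_bounded hg)
  have hunif : ∀ n, hypo (u n) ⊆ closedBall (0 : E2) R := by
    intro n p hp
    have h1 : Metric.infDist p (hypo g) ≤ r :=
      le_trans (Metric.infDist_le_hausdorffDist_of_mem hp (hEfin n)) (hr (u n) (hu n))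
    have h2 : Metric.infDist p (hypo g) < r + 1 := lt_of_le_of_lt h1 (by linarith)
    obtain ⟨q, hq, hpq⟩ := (Metric.infDist_lt_iff (hypo_nonempty hg)).1 h2
    have hqn : dist q (0 : E2) ≤ Rg := mem_closedBall.1 (hRg hq)
    rw [mem_closedBall]
    calc dist p (0 : E2) ≤ dist p q + dist q 0 := dist_triangle _ _ _
      _ ≤ (r + 1) + Rg := add_le_add hpq.le hqn
      _ ≤ R := by rw [hRdef]; linarith
  set B := closedBall (0 : E2) R with hBdef
  have hBc : IsCompact B := isCompact_closedBall _ _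
  haveI : CompactSpace ↥B := isCompact_iff_compactSpace.1 hBc
  have hcln : ∀ n, IsClosed (hypo (u n)) := fun n => hypo_closed (hA _ (hu n))
  let v : ℕ → TopologicalSpace.NonemptyCompacts ↥B := fun n =>
    ⟨⟨Subtype.val ⁻¹' hypo (u n),
      ((hcln n).preimage continuous_subtype_val).isCompact⟩,
      by obtain ⟨p, hp⟩ := hypo_nonempty (hA _ (hu n)); exact ⟨⟨p, hunif n hp⟩, hp⟩⟩
  obtain ⟨Klim, -, φ, hφ, hconv⟩ := isCompact_univ.tendsto_subseq (fun n => Set.mem_univ (v n))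
  have hconv' : Tendsto (fun n => dist (v (φ n)) Klim) atTop (nhds 0) :=
    tendsto_iff_dist_tendsto_zero.1 hconv
  set K : Set E2 := Subtype.val '' (Klim : Set ↥B) with hKdef
  have hKcomp : IsCompact K := Klim.isCompact.image continuous_subtype_val
  have hKne : K.Nonempty := Klim.nonempty.image _
  have hKcl : IsClosed K := hKcomp.isClosed
  have hKB : K ⊆ B := by rintro _ ⟨q, -, rfl⟩; exact q.2
  have hKbdd : Bornology.IsBounded K := hBc.isBounded.subset hKB
  have hval : ∀ n, Subtype.val '' ((v n : Set ↥B)) = hypo (u n) := by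
    intro n
    show Subtype.val '' (Subtype.val ⁻¹' hypo (u n)) = hypo (u n)
    apply Set.image_preimage_eq_of_subset
    rw [Subtype.range_coe]
    exact hunif n
  have hdist_eq : ∀ n, Metric.hausdorffDist (hypo (u (φ n))) K = dist (v (φ n)) Klim := by
    intro n
    rw [← hval (φ n), hKdef, Metric.hausdorffDist_image isometry_subtype_coe]
    rfl
  have hKdist : Tendsto (fun n => Metric.hausdorffDist (hypo (u (φ n))) K) atTop (nhds 0) := by
    simpa [hdist_eq] using hconv'
  have hfinK : ∀ n, EMetric.hausdorffEdist (hypo (u (φ n))) K ≠ ⊤ := fun n =>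
    Metric.hausdorffEdist_ne_top_of_nonempty_of_bounded (hypo_nonempty (hA _ (hu (φ n)))) hKne
      (hypo_bounded (hA _ (hu (φ n)))) hKbdd
  have claimA : ∀ x ∈ Set.Icc (0:ℝ) 1, mk2 x 0 ∈ K := by
    intro x hx
    rw [hKcl.mem_iff_infDist_zero hKne]
    have h1 : ∀ n, Metric.infDist (mk2 x 0) K ≤ Metric.hausdorffDist (hypo (u (φ n))) K :=
      fun n => Metric.infDist_le_hausdorffDist_of_mem
        (mk2_mem_hypo hx le_rfl ((hA _ (hu (φ n))).1 x hx)) (hfinK n)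
    have h2 : Metric.infDist (mk2 x 0) K ≤ 0 := ge_of_tendsto hKdist (Eventually.of_forall h1)
    exact le_antisymm h2 Metric.infDist_nonneg
  have approx : ∀ p ∈ K, ∃ q : ℕ → EuclideanSpace ℝ (Fin 2), (∀ n, q n ∈ hypo (u (φ n))) ∧
      Tendsto q atTop (nhds p) := by
    intro p hp
    have h1 : ∀ n : ℕ, ∃ q ∈ hypo (u (φ n)),
        dist p q < Metric.hausdorffDist (hypo (u (φ n))) K + (1:ℝ)/(n+1) := by
      intro n
      apply (Metric.infDist_lt_iff (hypo_nonempty (hA _ (hu (φ n))))).1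
      have h0 : Metric.infDist p (hypo (u (φ n))) ≤ Metric.hausdorffDist (hypo (u (φ n))) K := by
        rw [Metric.hausdorffDist_comm]
        exact Metric.infDist_le_hausdorffDist_of_mem hp
          (by rw [EMetric.hausdorffEdist_comm]; exact hfinK n)
      have hpos : (0:ℝ) < 1/(n+1) := by positivity
      linarith
    choose q hq hdq using h1
    refine ⟨q, hq, ?_⟩
    rw [tendsto_iff_dist_tendsto_zero]
    have hbound : ∀ n : ℕ, dist (q n) p ≤ Metric.hausdorffDist (hypo (u (φ n))) K + 1/(n+1) := by
      intro n
      rw [dist_comm]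
      exact (hdq n).le
    have h2 : Tendsto (fun n : ℕ => Metric.hausdorffDist (hypo (u (φ n))) K + 1/(n+1)) atTop
        (nhds 0) := by
      have := hKdist.add tendsto_one_div_add_atTop_nhds_zero_nat
      simpa using this
    exact squeeze_zero (fun n => dist_nonneg) hbound h2
  have claimC : ∀ p ∈ K, p 0 ∈ Set.Icc (0:ℝ) 1 ∧ 0 ≤ p 1 := by
    intro p hp
    obtain ⟨q, hq, hlim⟩ := approx p hp
    constructor
    · exact isClosed_Icc.mem_of_tendsto (tendsto_coord hlim 0)
        (Eventually.of_forall fun n => (hq n).1)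
    · exact ge_of_tendsto (tendsto_coord hlim 1) (Eventually.of_forall fun n => (hq n).2.1)
  have claimB : ∀ p ∈ K, ∀ y : ℝ, 0 ≤ y → y ≤ p 1 → mk2 (p 0) y ∈ K := by
    intro p hp y hy0 hy1
    obtain ⟨q, hq, hlim⟩ := approx p hp
    set rr : ℕ → EuclideanSpace ℝ (Fin 2) := fun n => mk2 (q n 0) (min y (q n 1)) with hrrdef
    have hrmem : ∀ n, rr n ∈ hypo (u (φ n)) := fun n =>
      mk2_mem_hypo (hq n).1 (le_min hy0 (hq n).2.1) (le_trans (min_le_right _ _) (hq n).2.2)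
    have hrlim : Tendsto rr atTop (nhds (mk2 (p 0) y)) := by
      have h1 : Tendsto (fun n => min y (q n 1)) atTop (nhds (min y (p 1))) :=
        tendsto_const_nhds.min (tendsto_coord hlim 1)
      rw [min_eq_left hy1] at h1
      exact tendsto_mk2 (tendsto_coord hlim 0) h1
    rw [hKcl.mem_iff_infDist_zero hKne]
    refine le_antisymm ?_ Metric.infDist_nonneg
    have h2 : ∀ n, Metric.infDist (mk2 (p 0) y) K ≤
        dist (mk2 (p 0) y) (rr n) + Metric.hausdorffDist (hypo (u (φ n))) K := by
      intro n
      calc Metric.infDist (mk2 (p 0) y) K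
          ≤ Metric.infDist (rr n) K + dist (mk2 (p 0) y) (rr n) :=
            Metric.infDist_le_infDist_add_dist
        _ ≤ dist (mk2 (p 0) y) (rr n) + Metric.hausdorffDist (hypo (u (φ n))) K := by
            have := Metric.infDist_le_hausdorffDist_of_mem (hrmem n) (hfinK n)
            linarith
    have h3 : Tendsto (fun n => dist (mk2 (p 0) y) (rr n) +
        Metric.hausdorffDist (hypo (u (φ n))) K) atTop (nhds 0) := by
      have hd : Tendsto (fun n => dist (mk2 (p 0) y) (rr n)) atTop (nhds 0) := by
        have := tendsto_iff_dist_tendsto_zero.1 hrlim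
        simpa [dist_comm] using this
      simpa using hd.add hKdist
    exact ge_of_tendsto h3 (Eventually.of_forall h2)
  set S : ℝ → Set ℝ := fun x => {y | mk2 x y ∈ K} with hSdef
  set F : ℝ → ℝ := fun x => sSup (S x) with hFdef
  have hSbdd : ∀ x, BddAbove (S x) := by
    intro x
    refine ⟨R, fun y hy => ?_⟩
    have h1 : mk2 x y ∈ B := hKB hy
    have h2 : |y| ≤ R := by
      have h3 := abs_coord_le_norm (mk2 x y) 1
      rw [mk2_apply1] at h3
      exact le_trans h3 (by simpa [dist_zero_right] using mem_closedBall.1 h1)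
    exact le_trans (le_abs_self y) h2
  have hSclosed : ∀ x, IsClosed (S x) := fun x =>
    hKcl.preimage (lipschitz_mk2 x).continuous
  have hSne : ∀ x ∈ Set.Icc (0:ℝ) 1, (0:ℝ) ∈ S x := fun x hx => claimA x hx
  have hFmem : ∀ x ∈ Set.Icc (0:ℝ) 1, mk2 x (F x) ∈ K := fun x hx =>
    (hSclosed x).csSup_mem ⟨0, hSne x hx⟩ (hSbdd x)
  have hFnonneg : ∀ x ∈ Set.Icc (0:ℝ) 1, 0 ≤ F x := fun x hx =>
    le_csSup (hSbdd x) (hSne x hx)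
  have h_hypoF : hypo F = K := by
    apply Set.Subset.antisymm
    · rintro p ⟨hp0, hp1, hp2⟩
      rw [← mk2_eta p]
      have hmem := hFmem _ hp0
      have hB := claimB _ hmem (p 1) hp1 (by simpa using hp2)
      simpa using hB
    · intro p hp
      obtain ⟨hp0, hp1⟩ := claimC p hp
      refine ⟨hp0, hp1, ?_⟩
      apply le_csSup (hSbdd (p 0))
      show mk2 (p 0) (p 1) ∈ K
      rw [mk2_eta]
      exact hp
  have hFusc : UpperSemicontinuousOn F (Set.Icc (0:ℝ) 1) := by
    intro x hx y hy
    have hy0 : 0 < y := lt_of_le_of_lt (hFnonneg x hx) hy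
    set C : Set (EuclideanSpace ℝ (Fin 2)) := K ∩ {p | y ≤ p 1} with hCdef
    have hCcomp : IsCompact C :=
      hKcomp.inter_right (isClosed_le continuous_const (EuclideanSpace.proj (1 : Fin 2)).continuous)
    have hPcl : IsClosed ((fun p : EuclideanSpace ℝ (Fin 2) => p 0) '' C) :=
      (hCcomp.image (EuclideanSpace.proj (0 : Fin 2)).continuous).isClosed
    have hxP : x ∉ (fun p : EuclideanSpace ℝ (Fin 2) => p 0) '' C := by
      rintro ⟨p, ⟨hpK, hpy⟩, rfl⟩
      have h1 : p 1 ≤ F (p 0) := by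
        apply le_csSup (hSbdd _)
        show mk2 (p 0) (p 1) ∈ K
        rw [mk2_eta]
        exact hpK
      have h2 : y ≤ p 1 := hpy
      linarith
    have hev : ∀ᶠ x' in nhds x, x' ∉ (fun p : EuclideanSpace ℝ (Fin 2) => p 0) '' C :=
      hPcl.isOpen_compl.eventually_mem hxP
    filter_upwards [nhdsWithin_le_nhds hev, self_mem_nhdsWithin] with x' hx'P hx'I
    by_contra hcon
    push_neg at hcon
    have hmem : mk2 x' y ∈ K := by
      have hB := claimB _ (hFmem x' hx'I) y hy0.le (by simpa using hcon)
      simpa using hB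
    exact hx'P ⟨mk2 x' y, ⟨hmem, by simp⟩, by simp⟩
  have hFE : memE F := ⟨hFnonneg, hFusc⟩
  have htend : Tendsto (fun n => HH (u (φ n)) F) atTop (nhds 0) := by
    have heq : (fun n => HH (u (φ n)) F) = fun n => Metric.hausdorffDist (hypo (u (φ n))) K := by
      funext n
      rw [HH, h_hypoF]
    rw [heq]
    exact hKdist
  exact ⟨F, hclosed (fun n => u (φ n)) (fun n => hu (φ n)) F hFE htend, φ, hφ, htend⟩
end
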